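/- For any binary word x of length n, the number of supersequences of x of length n+r (the radius-r insertion ball) has size exactly sum over i from 0 to r of binomial(n+r, i), independent of x. -/

import Mathlib

/-- The finset of supersequences of `x` of length `x.length + r`. -/
def insBall : List Bool → ℕ → Finset (List Bool)
  | [], 0 => {([] : List Bool)}
  | [], r+1 => (insBall [] r).image (true :: ·) ∪ (insBall [] r).image (false :: ·)
  | a :: x, 0 => {a :: x}
  | a :: x, r+1 => (insBall x (r+1)).image (a :: ·) ∪ (insBall (a :: x) r).image ((!a) :: ·)
termination_by x r => x.length + r

lemma sublist_of_cons_of_ne {a b : Bool} {x z : List Bool}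
    (h : (a :: x).Sublist (b :: z)) (hab : a ≠ b) : (a :: x).Sublist z := by
  cases h with
  | cons _ h => exact h
  | cons_cons => exact absurd rfl hab

lemma mem_insBall : ∀ (x : List Bool) (r : ℕ) (z : List Bool),
    z ∈ insBall x r ↔ z.length = x.length + r ∧ x.Sublist z
  | [], 0, z => by
    simp [insBall, List.length_eq_zero_iff, eq_comm]
  | [], r+1, z => by
    rw [insBall]
    constructor
    · rintro h
      simp only [Finset.mem_union, Finset.mem_image] at h
      rcases h with ⟨w, hw, rfl⟩ | ⟨w, hw, rfl⟩ <;>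
        simpa using ((mem_insBall [] r w).1 hw).1
    · rintro ⟨hl, -⟩
      cases z with
      | nil => simp at hl
      | cons b z' =>
        have hz' : z' ∈ insBall [] r := (mem_insBall [] r z').2 (by simpa using hl)
        cases b
        · exact Finset.mem_union_right _ (Finset.mem_image_of_mem _ hz')
        · exact Finset.mem_union_left _ (Finset.mem_image_of_mem _ hz')
  | a :: x, 0, z => by
    rw [insBall]
    simp only [Finset.mem_singleton]
    constructor
    · rintro rfl; exact ⟨by simp, List.Sublist.refl _⟩
    · rintro ⟨hl, hs⟩
      exact (hs.eq_of_length (by simpa using hl.symm)).symm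
  | a :: x, r+1, z => by
    rw [insBall]
    constructor
    · rintro h
      simp only [Finset.mem_union, Finset.mem_image] at h
      rcases h with ⟨w, hw, rfl⟩ | ⟨w, hw, rfl⟩
      · obtain ⟨hl, hs⟩ := (mem_insBall x (r+1) w).1 hw
        exact ⟨by simp only [List.length_cons, hl]; omega, List.cons_sublist_cons.2 hs⟩
      · obtain ⟨hl, hs⟩ := (mem_insBall (a :: x) r w).1 hw
        exact ⟨by simp only [List.length_cons, hl]; omega, hs.cons _⟩
    · rintro ⟨hl, hs⟩
      cases z with
      | nil => simp only [List.length_nil] at hl; omega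
      | cons b z' =>
        simp only [List.length_cons] at hl
        simp only [Finset.mem_union, Finset.mem_image]
        by_cases hb : b = a
        · subst hb
          exact Or.inl ⟨z', (mem_insBall x (r+1) z').2
            ⟨by omega, List.cons_sublist_cons.1 hs⟩, rfl⟩
        · have hb' : b = !a := by cases a <;> cases b <;> simp_all
          subst hb'
          have hs' : (a :: x).Sublist z' :=
            sublist_of_cons_of_ne hs (by cases a <;> simp)
          exact Or.inr ⟨z', (mem_insBall (a :: x) r z').2 ⟨by simp only [List.length_cons]; omega, hs'⟩, rfl⟩
termination_by x r => x.length + r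

lemma cons_inj (a : Bool) : Function.Injective (a :: · : List Bool → List Bool) :=
  fun _ _ h => by simpa using h

lemma sum_choose_succ (m k : ℕ) :
    ∑ i ∈ Finset.range (k+1), (m+1).choose i
      = ∑ i ∈ Finset.range (k+1), m.choose i + ∑ i ∈ Finset.range k, m.choose i := by
  induction k with
  | zero => simp
  | succ k ih =>
    rw [Finset.sum_range_succ, ih, Finset.sum_range_succ (f := fun i => m.choose i) (n := k+1),
      Finset.sum_range_succ (f := fun i => m.choose i) (n := k), Nat.choose_succ_succ]
    simp only [Nat.succ_eq_add_one]
    omega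

lemma card_insBall : ∀ (x : List Bool) (r : ℕ),
    (insBall x r).card = ∑ i ∈ Finset.range (r+1), (x.length + r).choose i
  | [], 0 => by simp [insBall]
  | [], r+1 => by
    rw [insBall, Finset.card_union_of_disjoint, Finset.card_image_of_injective _ (cons_inj true),
      Finset.card_image_of_injective _ (cons_inj false), card_insBall [] r]
    · simp only [List.length_nil, Nat.zero_add]
      rw [Nat.sum_range_choose, Nat.sum_range_choose]
      ring
    · simp only [Finset.disjoint_left, Finset.mem_image]
      rintro z ⟨w, _, rfl⟩ ⟨w', _, h⟩
      simp at h
  | a :: x, 0 => by simp [insBall]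
  | a :: x, r+1 => by
    rw [insBall, Finset.card_union_of_disjoint, Finset.card_image_of_injective _ (cons_inj a),
      Finset.card_image_of_injective _ (cons_inj (!a)), card_insBall x (r+1),
      card_insBall (a :: x) r]
    · simp only [List.length_cons]
      have h := sum_choose_succ (x.length + (r+1)) (r+1)
      have e1 : x.length + 1 + (r+1) = x.length + (r+1) + 1 := by ring
      have e2 : x.length + 1 + r = x.length + (r+1) := by ring
      rw [e1, e2, h, Finset.sum_range_succ]
    · simp only [Finset.disjoint_left, Finset.mem_image]
      rintro z ⟨w, _, rfl⟩ ⟨w', _, h⟩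
      cases a <;> simp_all
termination_by x r => x.length + r

theorem insertion_ball_card (x : List Bool) (r : ℕ) :
    {z : List Bool | z.length = x.length + r ∧ x.Sublist z}.ncard
      = ∑ i ∈ Finset.range (r + 1), (x.length + r).choose i := by
  have hset : {z : List Bool | z.length = x.length + r ∧ x.Sublist z} = ↑(insBall x r) := by
    ext z; simp [mem_insBall]
  rw [hset, Set.ncard_coe_finset, card_insBall]
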